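/- Let $v_0, v_6, v_{12} > 0$ and suppose there exist $t_1, t_2 > 0$ satisfying: $|v_1| \le 1/t_1 - 10 v_6/(t_1 \sqrt{v_0 v_{12}})$; $|v_{11}| \le 1/t_2 - 10 v_6/(t_2 \sqrt{v_0 v_{12}})$; $|v_1|(5/(t_1 v_0))^5 + |v_{11}|(5/(t_2 v_{12}))^5 \le \frac{\sqrt{70}-8}{2} v_6$; and $\big(v_0 - 10 v_6 \sqrt{v_0/v_{12}} - |v_1| t_1 v_0\big)\big(v_{12} - 10 v_6 \sqrt{v_{12}/v_0} - |v_{11}| t_2 v_{12}\big)\big(\frac{\sqrt{70}-8}{2} v_6 - |v_1|(5/(t_1 v_0))^5 - |v_{11}|(5/(t_2 v_{12}))^5\big) \ge \frac{1}{27} v_6^3 (60 + 15\sqrt{70})^3$. Then $f(x_1,x_2,x_3) = v_0 x_1^6 + 6 v_1 x_1^5 x_2 + v_6(x_2^6 + 30 x_1 x_2^4 x_3 + 90 x_1^2 x_2^2 x_3^2 + 20 x_1^3 x_3^3) + 6 v_{11} x_2 x_3^5 + v_{12} x_3^6$ is nonnegative on $\mathbb{R}^3$. -/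

import Mathlib

private lemma amgm5 (X Y : ℝ) (hX : 0 ≤ X) (hY : 0 ≤ Y) : 6 * X^5 * Y ≤ 5 * X^6 + Y^6 := by
  nlinarith [mul_nonneg (sq_nonneg (X - Y))
      (by nlinarith [pow_nonneg hX 4, pow_nonneg hY 4,
        mul_nonneg (pow_nonneg hX 3) hY, mul_nonneg hX (pow_nonneg hY 3),
        mul_nonneg (mul_nonneg hX hX) (mul_nonneg hY hY)] :
        (0:ℝ) ≤ 5*X^4 + 4*X^3*Y + 3*X^2*Y^2 + 2*X*Y^3 + Y^4)]

private lemma amgm5' (ε X Y : ℝ) (hε : 0 < ε) (hX : 0 ≤ X) (hY : 0 ≤ Y) :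
    6 * X^5 * Y ≤ 5*ε*X^6 + (1/ε)^5 * Y^6 := by
  have h := amgm5 (ε*X) Y (by positivity) hY
  have h5 : (0:ℝ) < ε^5 := by positivity
  rw [← mul_le_mul_iff_right₀ h5]
  have he : ε^5 * ((1/ε)^5 * Y^6) = Y^6 := by field_simp
  nlinarith [h, he]

private lemma bound1 (v T x y : ℝ) (hT : 0 < T) :
    -( |v| * T * x^6 + |v| * (5/T)^5 * y^6 ) ≤ 6 * v * x^5 * y := by
  have h := amgm5' (T/5) |x| |y| (by positivity) (abs_nonneg x) (abs_nonneg y)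
  rw [one_div_div] at h
  have h' := mul_le_mul_of_nonneg_left h (abs_nonneg v)
  have e1 : |x|^6 = x^6 := by rw [← abs_pow]; exact abs_of_nonneg (by positivity)
  have e2 : |y|^6 = y^6 := by rw [← abs_pow]; exact abs_of_nonneg (by positivity)
  rw [e1, e2] at h'
  have e3 : |v| * (6 * |x|^5 * |y|) = |6 * v * x^5 * y| := by
    rw [abs_mul, abs_mul, abs_mul, abs_pow]
    norm_num
    ring
  nlinarith [h', neg_abs_le (6 * v * x^5 * y), e3]

private lemma rlt10 (r : ℝ) (h : r ^ 2 = 70) (hn : 0 ≤ r) : r < 10 := by nlinarith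

private lemma rgt8 (r : ℝ) (h : r ^ 2 = 70) (hn : 0 ≤ r) : 8 < r := by nlinarith

private lemma case_pos (a b c v6 u x1 x2 x3 : ℝ) (ha : 0 ≤ a) (hb : 0 ≤ b) (hc : 0 ≤ c)
    (hv6 : 0 ≤ v6) (hu : 0 ≤ u) :
    0 ≤ a * x1 ^ 6 + c * x3 ^ 6 + b * x2 ^ 6 +
      v6 * (30 * u * x2 ^ 4 + 90 * u ^ 2 * x2 ^ 2 + 20 * u ^ 3) := by
  have t1' : 0 ≤ a * x1 ^ 6 := mul_nonneg ha (by positivity)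
  have t2' : 0 ≤ c * x3 ^ 6 := mul_nonneg hc (by positivity)
  have t3' : 0 ≤ b * x2 ^ 6 := mul_nonneg hb (by positivity)
  have t4' : 0 ≤ v6 * (u * x2 ^ 4) := mul_nonneg hv6 (mul_nonneg hu (by positivity))
  have t5' : 0 ≤ v6 * (u ^ 2 * x2 ^ 2) :=
    mul_nonneg hv6 (mul_nonneg (sq_nonneg u) (sq_nonneg x2))
  have t6' : 0 ≤ v6 * u ^ 3 := mul_nonneg hv6 (pow_nonneg hu 3)
  nlinarith [t1', t2', t3', t4', t5', t6']

private lemma two_am (X Y σ : ℝ) (hX : 0 ≤ X) (hY : 0 ≤ Y) (hσ : 0 ≤ σ)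
    (h : X * Y = σ ^ 2) : 2 * σ ≤ X + Y := by
  nlinarith [sq_nonneg (X - Y)]

private lemma i0lem (ac PQ M σ v6 : ℝ) (hv6 : 0 ≤ v6) (hσ2 : σ ^ 2 = PQ)
    (hmid : 2 * σ ≤ M) (e5 : ac = PQ + 10 * v6 * M + 100 * v6 ^ 2) :
    (σ + 10 * v6) ^ 2 ≤ ac := by
  nlinarith [mul_le_mul_of_nonneg_left hmid (by linarith : (0:ℝ) ≤ 10 * v6)]

private lemma i1lem (a c k X Y w : ℝ) (ha : 0 ≤ a) (hc : 0 ≤ c) (hk : 0 ≤ k) (hw : 0 ≤ w)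
    (hX : 0 ≤ X) (hY : 0 ≤ Y) (h6 : X * Y = w ^ 6) (h : k ^ 2 ≤ a * c) :
    2 * k * w ^ 3 ≤ a * X + c * Y := by
  have i0w : k ^ 2 * w ^ 6 ≤ a * c * (X * Y) := by
    rw [h6]; exact mul_le_mul_of_nonneg_right h (by positivity)
  nlinarith [sq_nonneg (a * X - c * Y), i0w, mul_nonneg ha hX, mul_nonneg hc hY,
    mul_nonneg hk (pow_nonneg hw 3)]

private lemma sigpos (K R σ : ℝ) (hK : 0 < K) (h : K ^ 3 ≤ R * σ ^ 2) (hσ : 0 ≤ σ)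
    (hR : 0 ≤ R) : 0 < σ := by
  rcases hσ.lt_or_eq with h0 | h0
  · exact h0
  · exfalso; rw [← h0] at h; nlinarith [pow_pos hK 3]

private lemma iilem (K R σ s w : ℝ) (hK : 0 < K) (hR : 0 ≤ R) (hσ : 0 < σ) (hs : 0 ≤ s)
    (hw : 0 ≤ w) (h : K ^ 3 ≤ R * σ ^ 2) :
    3 * K * s * w ^ 2 ≤ R * s ^ 3 + 2 * σ * w ^ 3 := by
  have hfact : 0 ≤ (K * s - σ * w) ^ 2 * (K * s + 2 * (σ * w)) :=
    mul_nonneg (sq_nonneg _) (by positivity)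
  have h6 : 0 ≤ σ ^ 2 * (R * s ^ 3 + 2 * σ * w ^ 3 - 3 * K * s * w ^ 2) := by
    nlinarith [hfact, mul_le_mul_of_nonneg_right h (pow_nonneg hs 3)]
  nlinarith [h6, pow_pos hσ 2]

private lemma iiilem (r s w : ℝ) (hs : 0 ≤ s) (hw : 0 ≤ w) (h70 : r ^ 2 = 70)
    (hlt : r < 10) :
    0 ≤ (10 - r) / 2 * s ^ 3 - 30 * w * s ^ 2 + (150 + 15 * r) * w ^ 2 * s := by
  have e : 2 * (10 - r) * ((10 - r) / 2 * s ^ 3 - 30 * w * s ^ 2 +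
      (150 + 15 * r) * w ^ 2 * s) = s * ((10 - r) * s - 30 * w) ^ 2 := by
    linear_combination (-30 * w ^ 2 * s) * h70
  have hnn : 0 ≤ s * ((10 - r) * s - 30 * w) ^ 2 := mul_nonneg hs (sq_nonneg _)
  nlinarith [e, hnn, hlt]

set_option maxHeartbeats 2000000 in
theorem stmt_10 (v0 v1 v6 v11 v12 : ℝ) (hv0 : 0 < v0) (hv6 : 0 < v6) (hv12 : 0 < v12)
    (t1 t2 : ℝ) (ht1 : 0 < t1) (ht2 : 0 < t2)
    (h1 : |v1| ≤ 1 / t1 - 10 * v6 / (t1 * Real.sqrt (v0 * v12)))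
    (h2 : |v11| ≤ 1 / t2 - 10 * v6 / (t2 * Real.sqrt (v0 * v12)))
    (h3 : |v1| * (5 / (t1 * v0)) ^ 5 + |v11| * (5 / (t2 * v12)) ^ 5 ≤
      (Real.sqrt 70 - 8) / 2 * v6)
    (h4 : (v0 - 10 * v6 * Real.sqrt (v0 / v12) - |v1| * t1 * v0) *
        (v12 - 10 * v6 * Real.sqrt (v12 / v0) - |v11| * t2 * v12) *
        ((Real.sqrt 70 - 8) / 2 * v6 - |v1| * (5 / (t1 * v0)) ^ 5 -
          |v11| * (5 / (t2 * v12)) ^ 5) ≥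
      1 / 27 * v6 ^ 3 * (60 + 15 * Real.sqrt 70) ^ 3) :
    ∀ x1 x2 x3 : ℝ,
      0 ≤ v0 * x1 ^ 6 + 6 * v1 * x1 ^ 5 * x2 +
          v6 * (x2 ^ 6 + 30 * x1 * x2 ^ 4 * x3 + 90 * x1 ^ 2 * x2 ^ 2 * x3 ^ 2 +
            20 * x1 ^ 3 * x3 ^ 3) + 6 * v11 * x2 * x3 ^ 5 + v12 * x3 ^ 6 := by
  obtain ⟨S, hSdef⟩ : ∃ S : ℝ, S = Real.sqrt (v0 * v12) := ⟨_, rfl⟩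
  rw [← hSdef] at h1 h2
  have hS : 0 < S := hSdef ▸ Real.sqrt_pos.mpr (by positivity)
  have hS2 : S ^ 2 = v0 * v12 := hSdef ▸ Real.sq_sqrt (by positivity : (0:ℝ) ≤ v0 * v12)
  obtain ⟨p, hpdef⟩ : ∃ p : ℝ, p = v0 / S := ⟨_, rfl⟩
  obtain ⟨q, hqdef⟩ : ∃ q : ℝ, q = v12 / S := ⟨_, rfl⟩
  have hp : 0 < p := by rw [hpdef]; positivity
  have hq : 0 < q := by rw [hqdef]; positivity
  have hpq : p * q = 1 := by
    rw [hpdef, hqdef, div_mul_div_comm, ← hS2]; field_simp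
  have ep : Real.sqrt (v0 / v12) = p := by
    rw [hpdef, eq_div_iff hS.ne', hSdef, ← Real.sqrt_mul (by positivity : (0:ℝ) ≤ v0 / v12)]
    rw [div_mul_eq_mul_div, mul_comm v0 v12, mul_div_assoc, mul_div_cancel_left₀ _ hv12.ne']
    exact Real.sqrt_mul_self hv0.le
  have eq' : Real.sqrt (v12 / v0) = q := by
    rw [hqdef, eq_div_iff hS.ne', hSdef, mul_comm v0 v12,
      ← Real.sqrt_mul (by positivity : (0:ℝ) ≤ v12 / v0)]
    rw [div_mul_eq_mul_div, mul_comm v12 v0, mul_div_assoc, mul_div_cancel_left₀ _ hv0.ne']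
    exact Real.sqrt_mul_self hv12.le
  rw [ep, eq'] at h4
  obtain ⟨r70, hrdef⟩ : ∃ r : ℝ, r = Real.sqrt 70 := ⟨_, rfl⟩
  rw [← hrdef] at h3 h4
  have h70 : r70 ^ 2 = 70 := hrdef ▸ Real.sq_sqrt (by norm_num)
  have hr70nn : 0 ≤ r70 := hrdef ▸ Real.sqrt_nonneg 70
  have hr70lt : r70 < 10 := rlt10 r70 h70 hr70nn
  have hr70gt : 8 < r70 := rgt8 r70 h70 hr70nn
  obtain ⟨P, hPdef⟩ : ∃ P : ℝ, P = v0 - 10 * v6 * p - |v1| * t1 * v0 := ⟨_, rfl⟩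
  obtain ⟨Q, hQdef⟩ : ∃ Q : ℝ, Q = v12 - 10 * v6 * q - |v11| * t2 * v12 := ⟨_, rfl⟩
  obtain ⟨R, hRdef⟩ : ∃ R : ℝ,
      R = (r70 - 8) / 2 * v6 - |v1| * (5 / (t1 * v0)) ^ 5 - |v11| * (5 / (t2 * v12)) ^ 5 :=
    ⟨_, rfl⟩
  rw [← hPdef, ← hQdef, ← hRdef] at h4
  have hP : 0 ≤ P := by
    have h := mul_le_mul_of_nonneg_left h1 (le_of_lt (mul_pos ht1 hv0))
    have e : t1 * v0 * (1 / t1 - 10 * v6 / (t1 * S)) = v0 - 10 * v6 * p := by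
      rw [hpdef]; field_simp
    rw [e] at h
    rw [hPdef]; linarith only [h]
  have hQ' : 0 ≤ Q := by
    have h := mul_le_mul_of_nonneg_left h2 (le_of_lt (mul_pos ht2 hv12))
    have e : t2 * v12 * (1 / t2 - 10 * v6 / (t2 * S)) = v12 - 10 * v6 * q := by
      rw [hqdef]; field_simp
    rw [e] at h
    rw [hQdef]; linarith only [h]
  have hR : 0 ≤ R := by rw [hRdef]; linarith only [h3]
  have h4' : ((20 + 5 * r70) * v6) ^ 3 ≤ P * Q * R := by
    have e : ((20 + 5 * r70) * v6) ^ 3 = 1 / 27 * v6 ^ 3 * (60 + 15 * r70) ^ 3 := by ring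
    linarith only [h4, e]
  intro x1 x2 x3
  have hA := bound1 v1 (t1 * v0) x1 x2 (mul_pos ht1 hv0)
  have hB := bound1 v11 (t2 * v12) x3 x2 (mul_pos ht2 hv12)
  -- the key inequality
  have key : 0 ≤ (v0 - |v1| * (t1 * v0)) * x1 ^ 6 + (v12 - |v11| * (t2 * v12)) * x3 ^ 6 +
      (v6 - |v1| * (5 / (t1 * v0)) ^ 5 - |v11| * (5 / (t2 * v12)) ^ 5) * x2 ^ 6 +
      v6 * (30 * (x1 * x3) * x2 ^ 4 + 90 * (x1 * x3) ^ 2 * x2 ^ 2 + 20 * (x1 * x3) ^ 3) := by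
    obtain ⟨a, hadef⟩ : ∃ a : ℝ, a = v0 - |v1| * (t1 * v0) := ⟨_, rfl⟩
    obtain ⟨c, hcdef⟩ : ∃ c : ℝ, c = v12 - |v11| * (t2 * v12) := ⟨_, rfl⟩
    obtain ⟨b, hbdef⟩ : ∃ b : ℝ,
        b = v6 - |v1| * (5 / (t1 * v0)) ^ 5 - |v11| * (5 / (t2 * v12)) ^ 5 := ⟨_, rfl⟩
    obtain ⟨u, hudef⟩ : ∃ u : ℝ, u = x1 * x3 := ⟨_, rfl⟩
    rw [← hadef, ← hbdef, ← hcdef, ← hudef]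
    have hbe : b = R + (10 - r70) / 2 * v6 := by rw [hbdef, hRdef]; ring
    have hae : a = P + 10 * v6 * p := by rw [hadef, hPdef]; ring
    have hce : c = Q + 10 * v6 * q := by rw [hcdef, hQdef]; ring
    have ha : 0 ≤ a := by
      have := mul_pos hv6 hp
      linarith only [hP, this, hae]
    have hc : 0 ≤ c := by
      have := mul_pos hv6 hq
      linarith only [hQ', this, hce]
    have hb : 0 ≤ b := by
      have hh : 0 ≤ (10 - r70) / 2 * v6 :=
        mul_nonneg (by linarith only [hr70lt]) hv6.le
      linarith only [hR, hh, hbe]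
    rcases le_or_gt 0 u with hu | hu
    · have := case_pos a b c v6 u x1 x2 x3 ha hb hc hv6.le hu
      linarith only [this]
    · obtain ⟨w, hwdef⟩ : ∃ w : ℝ, w = -u := ⟨_, rfl⟩
      have hw : 0 < w := by rw [hwdef]; linarith only [hu]
      obtain ⟨s, hsdef⟩ : ∃ s : ℝ, s = x2 ^ 2 := ⟨_, rfl⟩
      have hs : 0 ≤ s := by rw [hsdef]; positivity
      obtain ⟨σ, hσdef⟩ : ∃ σ : ℝ, σ = Real.sqrt (P * Q) := ⟨_, rfl⟩
      have hσnn : 0 ≤ σ := hσdef ▸ Real.sqrt_nonneg _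
      have hσ2 : σ ^ 2 = P * Q := hσdef ▸ Real.sq_sqrt (mul_nonneg hP hQ')
      -- step (i)
      have hmid : 2 * σ ≤ P * q + Q * p := by
        refine two_am (P * q) (Q * p) σ (mul_nonneg hP hq.le) (mul_nonneg hQ' hp.le) hσnn ?_
        linear_combination (P * Q) * hpq - hσ2
      have i0 : (σ + 10 * v6) ^ 2 ≤ a * c := by
        refine i0lem (a * c) (P * Q) (P * q + Q * p) σ v6 hv6.le hσ2 hmid ?_
        have e5 : a * c = P * Q + 10 * v6 * (P * q + Q * p) + 100 * v6 ^ 2 * (p * q) := by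
          rw [hadef, hcdef, hPdef, hQdef]; ring
        rw [hpq] at e5
        linarith only [e5]
      have hw6 : x1 ^ 6 * x3 ^ 6 = w ^ 6 := by rw [hwdef, hudef]; ring
      have i1 : 2 * (σ + 10 * v6) * w ^ 3 ≤ a * x1 ^ 6 + c * x3 ^ 6 :=
        i1lem a c (σ + 10 * v6) (x1 ^ 6) (x3 ^ 6) w ha hc
          (by positivity) hw.le (by positivity) (by positivity) hw6 i0
      -- step (ii)
      have hK : 0 < (20 + 5 * r70) * v6 :=
        mul_pos (by linarith only [hr70nn]) hv6
      have hRs : ((20 + 5 * r70) * v6) ^ 3 ≤ R * σ ^ 2 := by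
        have e : R * σ ^ 2 = P * Q * R := by rw [hσ2]; ring
        linarith only [h4', e]
      have hσpos : 0 < σ := sigpos _ R σ hK hRs hσnn hR
      have ii : 3 * ((20 + 5 * r70) * v6) * s * w ^ 2 ≤ R * s ^ 3 + 2 * σ * w ^ 3 :=
        iilem _ R σ s w hK hR hσpos hs hw.le hRs
      -- step (iii)
      have iii : 0 ≤ (10 - r70) / 2 * s ^ 3 - 30 * w * s ^ 2 + (150 + 15 * r70) * w ^ 2 * s :=
        iiilem r70 s w hs hw.le h70 hr70lt
      have iii' : 0 ≤ v6 * ((10 - r70) / 2 * s ^ 3 - 30 * w * s ^ 2 +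
          (150 + 15 * r70) * w ^ 2 * s) := mul_nonneg hv6.le iii
      -- assemble
      have f1 : v6 * (30 * u * x2 ^ 4 + 90 * u ^ 2 * x2 ^ 2 + 20 * u ^ 3) =
          -30 * v6 * w * s ^ 2 + 90 * v6 * w ^ 2 * s - 20 * v6 * w ^ 3 := by
        rw [hwdef, hsdef]; ring
      have hbe' : b * x2 ^ 6 = R * s ^ 3 + (10 - r70) / 2 * v6 * s ^ 3 := by
        rw [hbe, hsdef]; ring
      linarith only [i1, ii, iii', f1, hbe']
  linarith only [hA, hB, key]
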